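/- Let J₁ and J₂ be disjoint connected and convex subposets of (ℝ,≤)² and M:(ℝ,≤)²→vect_F a persistence module such that M(i≤j) is an isomorphism whenever i≤j lie in the same Jₖ (k=1,2). If a,a' ∈ J₁ and b,b' ∈ J₂ satisfy a ≤ b and a' ≤ b', then M(b⇝b')∘M(a≤b) = M(a'≤b')∘M(a⇝a'), where a⇝a' is any zigzag path in J₁ and b⇝b' is any zigzag path in J₂. -/

import Mathlib

/-- A persistence module over a preorder `P` with coefficients in a field `F`:
a functor `(P,≤) → Vect_F`, given by vector spaces `V p` and linear maps
`map : i ≤ j → (V i →ₗ[F] V j)` satisfying the functoriality equations. -/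
structure PersistenceModule (F : Type) [Field F] (P : Type) [Preorder P] where
  V : P → Type
  [addCommGroup : ∀ p, AddCommGroup (V p)]
  [module : ∀ p, Module F (V p)]
  map : ∀ {i j : P}, i ≤ j → (V i →ₗ[F] V j)
  map_id : ∀ i : P, map (le_refl i) = LinearMap.id
  map_comp : ∀ {i j k : P} (hij : i ≤ j) (hjk : j ≤ k),
    (map hjk).comp (map hij) = map (hij.trans hjk)

attribute [instance] PersistenceModule.addCommGroup PersistenceModule.module

/-- A zigzag path `a - x₁ - ⋯ - xₙ - b` in a preorder, where each consecutive
pair of points is comparable. -/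
inductive Zigzag (P : Type) [Preorder P] : P → P → Type
  | single (a : P) : Zigzag P a a
  | consLe {a b c : P} (h : a ≤ b) (p : Zigzag P b c) : Zigzag P a c
  | consGe {a b c : P} (h : b ≤ a) (p : Zigzag P b c) : Zigzag P a c

/-- Convexity of a subset of a poset: `i ≤ j ≤ k` with `i, k ∈ J` implies `j ∈ J`. -/
def PosetConvex {P : Type} [Preorder P] (J : Set P) : Prop :=
  ∀ i ∈ J, ∀ k ∈ J, ∀ j : P, i ≤ j → j ≤ k → j ∈ J

/-- Connectedness: any two points of `J` are joined by a finite zigzag path inside `J`. -/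
def ZigzagConnected {P : Type} [Preorder P] (J : Set P) : Prop :=
  ∀ a b : J, Nonempty (Zigzag (↥J) a b)

/-- The composite `M(a ⇝ b)` along a zigzag path, using `M̂(i,j) = M(i≤j)` on
good arrows and `M̂(i,j) = M(j≤i)⁻¹` on bad arrows. -/
noncomputable def zigzagMap {F : Type} [Field F] {P : Type} [Preorder P]
    (M : PersistenceModule F P)
    (hiso : ∀ (i j : P) (h : i ≤ j), Function.Bijective (M.map h)) :
    {a b : P} → Zigzag P a b → (M.V a →ₗ[F] M.V b)
  | _, _, .single _ => LinearMap.id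
  | _, _, .consLe h p => (zigzagMap M hiso p).comp (M.map h)
  | _, _, .consGe h p =>
      (zigzagMap M hiso p).comp
        ((LinearEquiv.ofBijective (M.map h) (hiso _ _ h)).symm.toLinearMap)

/-- Restriction of a persistence module to a subset of the parameter poset. -/
def PersistenceModule.restrict {F : Type} [Field F] {P : Type} [Preorder P]
    (M : PersistenceModule F P) (J : Set P) : PersistenceModule F ↥J where
  V i := M.V ↑i
  map {i j} h := M.map (show (i : P) ≤ (j : P) from h)
  map_id i := M.map_id ↑i
  map_comp _ _ := M.map_comp _ _

namespace Zigzag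

variable {P : Type} [Preorder P]

def cat : ∀ {a b c : P}, Zigzag P a b → Zigzag P b c → Zigzag P a c
  | _, _, _, .single _, q => q
  | _, _, _, .consLe h p, q => .consLe h (cat p q)
  | _, _, _, .consGe h p, q => .consGe h (cat p q)

def rev : ∀ {a b : P}, Zigzag P a b → Zigzag P b a
  | _, _, .single a => .single a
  | _, _, .consLe h p => cat (rev p) (.consGe h (.single _))
  | _, _, .consGe h p => cat (rev p) (.consLe h (.single _))

/-- List of all nodes of a zigzag (including both endpoints). -/
def nodes : ∀ {a b : P}, Zigzag P a b → List P
  | _, _, .single a => [a]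
  | a, _, .consLe _ p => a :: nodes p
  | a, _, .consGe _ p => a :: nodes p

lemma self_mem_nodes : ∀ {a b : P} (p : Zigzag P a b), a ∈ p.nodes
  | _, _, .single a => by simp [nodes]
  | _, _, .consLe _ p => by simp [nodes]
  | _, _, .consGe _ p => by simp [nodes]

lemma last_mem_nodes : ∀ {a b : P} (p : Zigzag P a b), b ∈ p.nodes
  | _, _, .single a => by simp [nodes]
  | _, _, .consLe _ p => by simp [nodes]; right; exact last_mem_nodes p
  | _, _, .consGe _ p => by simp [nodes]; right; exact last_mem_nodes p

end Zigzag

namespace S6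

section Basic
variable {F : Type} [Field F] {P : Type} [Preorder P]

/-- A "chamber": a family of vector spaces on a subset `J` with coherent
isomorphisms along all internal relations. -/
structure Chamber (F : Type) [Field F] {P : Type} [Preorder P] (J : Set P) where
  T : ↥J → Type
  [acg : ∀ j, AddCommGroup (T j)]
  [mod : ∀ j, Module F (T j)]
  e : ∀ {i j : ↥J}, (i : P) ≤ (j : P) → (T i ≃ₗ[F] T j)
  e_trans : ∀ {i j k : ↥J} (hij : (i : P) ≤ (j : P)) (hjk : (j : P) ≤ (k : P)) (t : T i),
    e hjk (e hij t) = e (hij.trans hjk) t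

attribute [instance] Chamber.acg Chamber.mod

variable {J : Set P} (C : Chamber F J)

lemma Chamber.e_refl {x : ↥J} (h : (x : P) ≤ (x : P)) (t : C.T x) : C.e h t = t := by
  have := C.e_trans h h t
  exact (C.e h).injective this

/-- The composite of the isomorphisms (or inverses) along a zigzag in a chamber. -/
noncomputable def czig : ∀ {x y : ↥J}, Zigzag (↥J) x y → (C.T x ≃ₗ[F] C.T y)
  | _, _, .single _ => LinearEquiv.refl F _
  | _, _, .consLe h p => (C.e h).trans (czig p)
  | _, _, .consGe h p => (C.e h).symm.trans (czig p)

@[simp] lemma czig_single (x : ↥J) : czig C (Zigzag.single x) = LinearEquiv.refl F _ := rfl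
@[simp] lemma czig_consLe {x y z : ↥J} (h : x ≤ y) (p : Zigzag (↥J) y z) :
    czig C (Zigzag.consLe h p) = (C.e h).trans (czig C p) := rfl
@[simp] lemma czig_consGe {x y z : ↥J} (h : y ≤ x) (p : Zigzag (↥J) y z) :
    czig C (Zigzag.consGe h p) = (C.e h).symm.trans (czig C p) := rfl

lemma czig_cat : ∀ {x y z : ↥J} (p : Zigzag (↥J) x y) (q : Zigzag (↥J) y z),
    czig C (p.cat q) = (czig C p).trans (czig C q)
  | _, _, _, .single _, q => by ext t; simp [Zigzag.cat]
  | _, _, _, .consLe h p, q => by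
      ext t; simp [Zigzag.cat, czig_cat p q]
  | _, _, _, .consGe h p, q => by
      ext t; simp [Zigzag.cat, czig_cat p q]

lemma czig_rev : ∀ {x y : ↥J} (p : Zigzag (↥J) x y),
    czig C p.rev = (czig C p).symm
  | _, _, .single _ => by ext t; simp [Zigzag.rev]
  | _, _, .consLe h p => by
      ext t; simp [Zigzag.rev, czig_cat, czig_rev p]
  | _, _, .consGe h p => by
      ext t; simp [Zigzag.rev, czig_cat, czig_rev p]

end Basic

end S6

namespace S6
section Moves
variable {F : Type} [Field F] {P : Type} [Preorder P] {J : Set P} (C : Chamber F J)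

lemma czig_mergeLL {x c c₂ z : ↥J} (h₁ : x ≤ c) (h₂ : c ≤ c₂) (p : Zigzag (↥J) c₂ z) :
    czig C (.consLe h₁ (.consLe h₂ p)) = czig C (.consLe (h₁.trans h₂) p) := by
  ext t; simp [C.e_trans]

lemma czig_mergeGG {x c c₂ z : ↥J} (h₁ : c ≤ x) (h₂ : c₂ ≤ c) (p : Zigzag (↥J) c₂ z) :
    czig C (.consGe h₁ (.consGe h₂ p)) = czig C (.consGe (h₂.trans h₁) p) := by
  ext t; simp only [czig_consGe, LinearEquiv.trans_apply]
  congr 1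
  apply (C.e (h₂.trans h₁ : (c₂:P) ≤ (x:P))).injective
  rw [LinearEquiv.apply_symm_apply]
  rw [← C.e_trans (h₂ : (c₂:P) ≤ c) (h₁ : (c:P) ≤ x), LinearEquiv.apply_symm_apply,
    LinearEquiv.apply_symm_apply]

lemma czig_lower {x c v z : ↥J} (h₁ : x ≤ c) (h₂ : v ≤ c) (hxj : x ≤ c) (j : ↥J)
    (hxj' : x ≤ j) (hvj : v ≤ j) (hjc : j ≤ c) (p : Zigzag (↥J) v z) :
    czig C (.consLe h₁ (.consGe h₂ p)) = czig C (.consLe hxj' (.consGe hvj p)) := by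
  ext t; simp only [czig_consLe, czig_consGe, LinearEquiv.trans_apply]
  congr 1
  apply (C.e (h₂ : (v:P) ≤ c)).injective
  rw [LinearEquiv.apply_symm_apply]
  rw [← C.e_trans (hvj : (v:P) ≤ j) (hjc : (j:P) ≤ c), LinearEquiv.apply_symm_apply,
    C.e_trans (hxj' : (x:P) ≤ j) (hjc : (j:P) ≤ c)]

lemma czig_collapseLe {c v c₂ z : ↥J} (h₁ : v ≤ c) (h₂ : v ≤ c₂) (hcc : c ≤ c₂)
    (p : Zigzag (↥J) c₂ z) :
    czig C (.consGe h₁ (.consLe h₂ p)) = czig C (.consLe hcc p) := by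
  ext t; simp only [czig_consLe, czig_consGe, LinearEquiv.trans_apply]
  congr 1
  rw [← C.e_trans (h₁ : (v:P) ≤ c) (hcc : (c:P) ≤ c₂), LinearEquiv.apply_symm_apply]

lemma czig_collapseGe {c v c₂ z : ↥J} (h₁ : v ≤ c) (h₂ : v ≤ c₂) (hcc : c₂ ≤ c)
    (p : Zigzag (↥J) c₂ z) :
    czig C (.consGe h₁ (.consLe h₂ p)) = czig C (.consGe hcc p) := by
  ext t; simp only [czig_consLe, czig_consGe, LinearEquiv.trans_apply]
  congr 1
  apply (C.e (hcc : (c₂:P) ≤ c)).injective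
  rw [LinearEquiv.apply_symm_apply, C.e_trans (h₂ : (v:P) ≤ c₂) (hcc : (c₂:P) ≤ c)]
  exact LinearEquiv.apply_symm_apply _ t

end Moves

section Bridge
variable {F : Type} [Field F] {P : Type} [Preorder P]

noncomputable def chamberOf (M : PersistenceModule F P) (J : Set P)
    (hiso : ∀ (i j : ↥J) (h : i ≤ j), Function.Bijective ((M.restrict J).map h)) :
    Chamber F J where
  T := (M.restrict J).V
  e {i j} h := LinearEquiv.ofBijective ((M.restrict J).map h) (hiso _ _ h)
  e_trans {i j k} hij hjk t := by
    simpa using (LinearMap.congr_fun ((M.restrict J).map_comp hij hjk) t)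

lemma zigzagMap_eq_czig {M : PersistenceModule F P} {J : Set P}
    {hiso : ∀ (i j : ↥J) (h : i ≤ j), Function.Bijective ((M.restrict J).map h)} :
    ∀ {x y : ↥J} (p : Zigzag (↥J) x y),
      zigzagMap (M.restrict J) hiso p = (czig (chamberOf M J hiso) p).toLinearMap
  | _, _, .single _ => rfl
  | _, _, .consLe h p => by
      ext t
      simp [zigzagMap, zigzagMap_eq_czig p, chamberOf, czig]
      rfl
  | _, _, .consGe h p => by
      ext t
      simp [zigzagMap, zigzagMap_eq_czig p, chamberOf, czig]
      rfl

end Bridge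

section Cones
variable {F : Type} [Field F] {P : Type} [Preorder P] {J : Set P} (C : Chamber F J)
variable {W : Type} [AddCommGroup W] [Module F W] {c : P}

/-- Transport along a bounded-above zigzag for a cone of maps into a fixed target. -/
lemma cone_transport
    (φ : ∀ (x : ↥J), (x : P) ≤ c → (C.T x →ₗ[F] W))
    (hφ : ∀ (x y : ↥J) (hxy : (x : P) ≤ (y : P)) (hyc : (y : P) ≤ c) (t : C.T x),
      φ y hyc (C.e hxy t) = φ x (le_trans hxy hyc) t) :
    ∀ {x y : ↥J} (p : Zigzag (↥J) x y) (_ : ∀ n ∈ p.nodes, (n : P) ≤ c)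
      (hxc : (x : P) ≤ c) (hyc : (y : P) ≤ c) (t : C.T x),
      φ y hyc (czig C p t) = φ x hxc t
  | _, _, .single _, hn, hxc, hyc, t => rfl
  | _, _, .consLe (b := m) h p, hn, hxc, hyc, t => by
      have hm : (m : P) ≤ c := hn m (by simp [Zigzag.nodes, Zigzag.self_mem_nodes])
      simp only [czig_consLe, LinearEquiv.trans_apply]
      rw [cone_transport φ hφ p (fun n hmem => hn n (by simp [Zigzag.nodes, hmem])) hm hyc]
      exact hφ _ _ h hm t
  | _, _, .consGe (b := v) h p, hn, hxc, hyc, t => by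
      have hv : (v : P) ≤ c := hn v (by simp [Zigzag.nodes, Zigzag.self_mem_nodes])
      simp only [czig_consGe, LinearEquiv.trans_apply]
      rw [cone_transport φ hφ p (fun n hmem => hn n (by simp [Zigzag.nodes, hmem])) hv hyc]
      have := hφ v _ h hxc ((C.e (h : (v:P) ≤ _)).symm t)
      rw [LinearEquiv.apply_symm_apply] at this
      rw [this]

/-- Transport along a bounded-below zigzag for a cocone of maps from a fixed source. -/
lemma cocone_transport
    (ψ : ∀ (x : ↥J), c ≤ (x : P) → (W →ₗ[F] C.T x))
    (hψ : ∀ (x y : ↥J) (hxy : (x : P) ≤ (y : P)) (hcx : c ≤ (x : P)) (t : W),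
      C.e hxy (ψ x hcx t) = ψ y (hcx.trans hxy) t) :
    ∀ {x y : ↥J} (p : Zigzag (↥J) x y) (_ : ∀ n ∈ p.nodes, c ≤ (n : P))
      (hcx : c ≤ (x : P)) (hcy : c ≤ (y : P)) (t : W),
      czig C p (ψ x hcx t) = ψ y hcy t
  | _, _, .single _, hn, hcx, hcy, t => rfl
  | _, _, .consLe (b := m) h p, hn, hcx, hcy, t => by
      have hm : c ≤ (m : P) := hn m (by simp [Zigzag.nodes, Zigzag.self_mem_nodes])
      simp only [czig_consLe, LinearEquiv.trans_apply]
      rw [hψ _ _ h hcx]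
      exact cocone_transport ψ hψ p (fun n hmem => hn n (by simp [Zigzag.nodes, hmem])) hm hcy t
  | _, _, .consGe (b := v) h p, hn, hcx, hcy, t => by
      have hv : c ≤ (v : P) := hn v (by simp [Zigzag.nodes, Zigzag.self_mem_nodes])
      simp only [czig_consGe, LinearEquiv.trans_apply]
      have : (C.e (h : (v:P) ≤ _)).symm (ψ _ hcx t) = ψ v hv t := by
        apply (C.e (h : (v:P) ≤ _)).injective
        rw [LinearEquiv.apply_symm_apply, hψ v _ h hv]
      rw [this]
      exact cocone_transport ψ hψ p (fun n hmem => hn n (by simp [Zigzag.nodes, hmem])) hv hcy t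

end Cones
end S6

namespace S6
section NormSec
variable {F : Type} [Field F] {P : Type} [Lattice P] {J : Set P}

open Classical in
noncomputable def rnk (S : Finset P) (n : P) : ℕ := (S.filter (fun m => m ≤ n)).card

noncomputable def nu (S : Finset P) {x y : ↥J} (p : Zigzag (↥J) x y) : ℕ :=
  (p.nodes.map (fun n => rnk S (n : P))).sum

@[simp] lemma nu_single (S : Finset P) (x : ↥J) : nu S (J := J) (.single x) = rnk S ↑x := by
  simp [nu, Zigzag.nodes]

@[simp] lemma nu_consLe (S : Finset P) {x m y : ↥J} (h : x ≤ m) (p : Zigzag (↥J) m y) :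
    nu S (.consLe h p) = rnk S ↑x + nu S p := by
  simp [nu, Zigzag.nodes]

@[simp] lemma nu_consGe (S : Finset P) {x m y : ↥J} (h : m ≤ x) (p : Zigzag (↥J) m y) :
    nu S (.consGe h p) = rnk S ↑x + nu S p := by
  simp [nu, Zigzag.nodes]

lemma rnk_pos {S : Finset P} {u : P} (hu : u ∈ S) : 0 < rnk S u := by
  classical
  apply Finset.card_pos.mpr
  exact ⟨u, by simp [rnk, hu]⟩

lemma rnk_lt {S : Finset P} {u w : P} (hu : u ≤ w) (hne : u ≠ w) (hw : w ∈ S) :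
    rnk S u < rnk S w := by
  classical
  unfold rnk
  apply Finset.card_lt_card
  have hsub : S.filter (fun m => m ≤ u) ⊆ S.filter (fun m => m ≤ w) := by
    intro m hm
    simp only [Finset.mem_filter] at hm ⊢
    exact ⟨hm.1, hm.2.trans hu⟩
  refine (Finset.ssubset_iff_of_subset hsub).mpr ⟨w, ?_, ?_⟩
  · simp [hw]
  · simp only [Finset.mem_filter, not_and]
    intro _ hwu
    exact hne (le_antisymm hu hwu)

/-- Terminal (fully reduced) zigzags: strictly alternating, all peaks tight,
and consecutive upper nodes incomparable. -/
def Term : ∀ {x y : ↥J}, Zigzag (↥J) x y → Prop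
  | _, _, .single _ => True
  | x, _, .consLe (b := c) _ (.single _) => x ≠ c
  | x, _, .consGe (b := c) _ (.single _) => c ≠ x
  | _, _, .consLe _ (.consLe _ _) => False
  | _, _, .consGe _ (.consGe _ _) => False
  | x, _, .consLe (b := c) _ (.consGe (b := v) h₂ p) =>
      x ≠ c ∧ v ≠ c ∧ (c : P) = ↑x ⊔ ↑v ∧ Term (.consGe h₂ p)
  | x, _, .consGe (b := v) _ (.consLe (b := c₂) h₂ p) =>
      v ≠ x ∧ v ≠ c₂ ∧ ¬((x : P) ≤ (c₂ : P)) ∧ ¬((c₂ : P) ≤ (x : P)) ∧ Term (.consLe h₂ p)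

variable (C : Chamber F J)

lemma Chamber.e_refl_symm {x : ↥J} (h : (x : P) ≤ (x : P)) (t : C.T x) :
    (C.e h).symm t = t := by
  apply (C.e h).injective
  rw [LinearEquiv.apply_symm_apply, C.e_refl]

lemma dichotomy (hconv : PosetConvex J) (S : Finset P)
    (hsup : ∀ x y : P, x ∈ S → y ∈ S → x ⊔ y ∈ S) :
    ∀ {x y : ↥J} (p : Zigzag (↥J) x y), (∀ n ∈ p.nodes, (n : P) ∈ S) →
      Term p ∨ ∃ p' : Zigzag (↥J) x y, czig C p' = czig C p ∧
        (∀ n ∈ p'.nodes, (n : P) ∈ S) ∧ nu S p' < nu S p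
  | x, _, .single _, hn => Or.inl trivial
  | x, _, .consLe (b := c) h (.single _), hn => by
      by_cases hxc : x = c
      · right
        subst hxc
        refine ⟨.single x, ?_, by simpa [Zigzag.nodes] using hn x (by simp [Zigzag.nodes]), ?_⟩
        · ext t; simp [C.e_refl]
        · simp only [nu_single, nu_consLe, nu_consGe]
          have := rnk_pos (hn x (by simp [Zigzag.nodes]))
          omega
      · exact Or.inl hxc
  | x, _, .consGe (b := c) h (.single _), hn => by
      by_cases hxc : c = x
      · right
        subst hxc
        refine ⟨.single c, ?_, by simpa [Zigzag.nodes] using hn c (by simp [Zigzag.nodes]), ?_⟩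
        · ext t; simp [C.e_refl_symm]
        · simp only [nu_single, nu_consLe, nu_consGe]
          have := rnk_pos (hn c (by simp [Zigzag.nodes]))
          omega
      · exact Or.inl hxc
  | x, _, .consLe (b := c) h₁ (.consLe (b := c₂) h₂ q), hn => by
      right
      refine ⟨.consLe (h₁.trans h₂) q, (czig_mergeLL C h₁ h₂ q).symm, ?_, ?_⟩
      · intro n hmem
        apply hn
        simp only [Zigzag.nodes, List.mem_cons] at hmem ⊢
        tauto
      · simp only [nu_single, nu_consLe, nu_consGe]
        have := rnk_pos (hn c (by simp [Zigzag.nodes]))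
        omega
  | x, _, .consGe (b := c) h₁ (.consGe (b := c₂) h₂ q), hn => by
      right
      refine ⟨.consGe (h₂.trans h₁) q, (czig_mergeGG C h₁ h₂ q).symm, ?_, ?_⟩
      · intro n hmem
        apply hn
        simp only [Zigzag.nodes, List.mem_cons] at hmem ⊢
        tauto
      · simp only [nu_single, nu_consLe, nu_consGe]
        have := rnk_pos (hn c (by simp [Zigzag.nodes]))
        omega
  | x, _, .consLe (b := c) h₁ (.consGe (b := v) h₂ q), hn => by
      have hxS : (x : P) ∈ S := hn x (by simp [Zigzag.nodes])
      have hcS : (c : P) ∈ S := hn c (by simp [Zigzag.nodes])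
      have hvS : (v : P) ∈ S := hn v (by simp [Zigzag.nodes, Zigzag.self_mem_nodes])
      by_cases hxc : x = c
      · right
        subst hxc
        refine ⟨.consGe h₂ q, ?_, ?_, ?_⟩
        · ext t; simp [C.e_refl]
        · intro n hmem; apply hn
          simp only [Zigzag.nodes, List.mem_cons] at hmem ⊢; tauto
        · simp only [nu_single, nu_consLe, nu_consGe]
          have := rnk_pos hxS
          omega
      by_cases hvc : v = c
      · right
        subst hvc
        refine ⟨.consLe h₁ q, ?_, ?_, ?_⟩
        · ext t; simp [C.e_refl_symm]
        · intro n hmem; apply hn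
          simp only [Zigzag.nodes, List.mem_cons] at hmem ⊢; tauto
        · simp only [nu_single, nu_consLe, nu_consGe]
          have := rnk_pos hvS
          omega
      by_cases htight : (c : P) = ↑x ⊔ ↑v
      · -- recurse into the tail
        rcases dichotomy hconv S hsup (.consGe h₂ q)
            (fun n hmem => hn n (by simp only [Zigzag.nodes, List.mem_cons] at hmem ⊢; tauto)) with
          ht | ⟨p', hz, hnn, hnu⟩
        · exact Or.inl ⟨hxc, hvc, htight, ht⟩
        · right
          refine ⟨.consLe h₁ p', ?_, ?_, ?_⟩
          · ext t; simp only [czig_consLe, LinearEquiv.trans_apply]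
            rw [hz]
          · intro n hmem
            simp only [Zigzag.nodes, List.mem_cons] at hmem
            rcases hmem with rfl | hmem
            · exact hxS
            · exact hnn n hmem
          · simp only [nu_single, nu_consLe, nu_consGe] at hnu ⊢
            omega
      · -- lower the peak
        right
        have hjle : (↑x ⊔ ↑v : P) ≤ ↑c := sup_le h₁ h₂
        have hjJ : (↑x ⊔ ↑v : P) ∈ J := hconv ↑x x.2 ↑c c.2 _ le_sup_left hjle
        refine ⟨.consLe (show x ≤ (⟨_, hjJ⟩ : ↥J) from le_sup_left)
            (.consGe (show v ≤ (⟨_, hjJ⟩ : ↥J) from le_sup_right) q), ?_, ?_, ?_⟩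
        · exact (czig_lower C h₁ h₂ h₁ ⟨_, hjJ⟩ le_sup_left le_sup_right hjle q).symm
        · intro n hmem
          simp only [Zigzag.nodes, List.mem_cons] at hmem
          rcases hmem with rfl | rfl | hmem
          · exact hxS
          · exact hsup _ _ hxS hvS
          · exact hn n (by simp only [Zigzag.nodes, List.mem_cons]; tauto)
        · simp only [nu_single, nu_consLe, nu_consGe]
          have : rnk S (↑x ⊔ ↑v) < rnk S ↑c := rnk_lt hjle (fun hh => htight hh.symm) hcS
          omega
  | x, _, .consGe (b := v) h₁ (.consLe (b := c₂) h₂ q), hn => by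
      have hxS : (x : P) ∈ S := hn x (by simp [Zigzag.nodes])
      have hvS : (v : P) ∈ S := hn v (by simp [Zigzag.nodes])
      by_cases hvx : v = x
      · right
        subst hvx
        refine ⟨.consLe h₂ q, ?_, ?_, ?_⟩
        · ext t; simp [C.e_refl_symm]
        · intro n hmem; apply hn
          simp only [Zigzag.nodes, List.mem_cons] at hmem ⊢; tauto
        · simp only [nu_single, nu_consLe, nu_consGe]
          have := rnk_pos hvS
          omega
      by_cases hvc : v = c₂
      · right
        subst hvc
        refine ⟨.consGe h₁ q, ?_, ?_, ?_⟩
        · ext t; simp [C.e_refl]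
        · intro n hmem; apply hn
          simp only [Zigzag.nodes, List.mem_cons] at hmem ⊢; tauto
        · simp only [nu_single, nu_consLe, nu_consGe]
          have := rnk_pos hvS
          omega
      by_cases hle : (x : P) ≤ (c₂ : P)
      · right
        refine ⟨.consLe (show x ≤ c₂ from hle) q, (czig_collapseLe C h₁ h₂ hle q).symm, ?_, ?_⟩
        · intro n hmem; apply hn
          simp only [Zigzag.nodes, List.mem_cons] at hmem ⊢; tauto
        · simp only [nu_single, nu_consLe, nu_consGe]
          have := rnk_pos hvS
          omega
      by_cases hge : (c₂ : P) ≤ (x : P)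
      · right
        refine ⟨.consGe (show c₂ ≤ x from hge) q, (czig_collapseGe C h₁ h₂ hge q).symm, ?_, ?_⟩
        · intro n hmem; apply hn
          simp only [Zigzag.nodes, List.mem_cons] at hmem ⊢; tauto
        · simp only [nu_single, nu_consLe, nu_consGe]
          have := rnk_pos hvS
          omega
      · rcases dichotomy hconv S hsup (.consLe h₂ q)
            (fun n hmem => hn n (by simp only [Zigzag.nodes, List.mem_cons] at hmem ⊢; tauto)) with
          ht | ⟨p', hz, hnn, hnu⟩
        · exact Or.inl ⟨hvx, hvc, hle, hge, ht⟩
        · right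
          refine ⟨.consGe h₁ p', ?_, ?_, ?_⟩
          · ext t; simp only [czig_consGe, LinearEquiv.trans_apply]
            rw [hz]
          · intro n hmem
            simp only [Zigzag.nodes, List.mem_cons] at hmem
            rcases hmem with rfl | hmem
            · exact hxS
            · exact hnn n hmem
          · simp only [nu_single, nu_consLe, nu_consGe] at hnu ⊢
            omega

end NormSec
end S6

namespace S6
section PackSec
variable {F : Type} [Field F] {P : Type} [Lattice P] {J : Set P}
variable {A B : Type} [LinearOrder A] [LinearOrder B]

lemma pack_inj (f : P → A) (g : P → B)
    (hle : ∀ x y : P, x ≤ y ↔ f x ≤ f y ∧ g x ≤ g y) :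
    ∀ x y : P, f x = f y → g x = g y → x = y := fun x y hf hg =>
  le_antisymm ((hle x y).mpr ⟨hf.le, hg.le⟩) ((hle y x).mpr ⟨hf.ge, hg.ge⟩)

lemma pack_mono_f (f : P → A) (g : P → B)
    (hle : ∀ x y : P, x ≤ y ↔ f x ≤ f y ∧ g x ≤ g y) : Monotone f :=
  fun _ _ h => ((hle _ _).mp h).1

lemma pack_comp (f : P → A) (g : P → B)
    (hle : ∀ x y : P, x ≤ y ↔ f x ≤ f y ∧ g x ≤ g y) :
    ∀ w z : P, f w = f z → w ≤ z ∨ z ≤ w := by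
  intro w z hf
  rcases le_total (g w) (g z) with h | h
  · exact Or.inl ((hle w z).mpr ⟨hf.le, h⟩)
  · exact Or.inr ((hle z w).mpr ⟨hf.ge, h⟩)

lemma exists_grid (f : P → A) (g : P → B)
    (hle : ∀ x y : P, x ≤ y ↔ f x ≤ f y ∧ g x ≤ g y)
    (hfs : ∀ x y : P, f (x ⊔ y) = f x ⊔ f y) (hgs : ∀ x y : P, g (x ⊔ y) = g x ⊔ g y)
    (L : List P) :
    ∃ S : Finset P, (∀ n ∈ L, n ∈ S) ∧ ∀ x y : P, x ∈ S → y ∈ S → x ⊔ y ∈ S := by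
  classical
  set s : Set P := {p | f p ∈ L.map f ∧ g p ∈ L.map g} with hs
  have hfin : s.Finite := by
    have hsub : s ⊆ (fun p => (f p, g p)) ⁻¹'
        (((L.map f).toFinset : Set A) ×ˢ ((L.map g).toFinset : Set B)) := by
      intro p hp
      simp only [hs, Set.mem_setOf_eq] at hp
      simp only [Set.mem_preimage, Set.mem_prod, Finset.mem_coe, List.mem_toFinset]
      exact ⟨hp.1, hp.2⟩
    refine Set.Finite.subset ?_ hsub
    apply Set.Finite.preimage
    · intro u _ v _ huv
      exact pack_inj f g hle u v (congrArg Prod.fst huv) (congrArg Prod.snd huv)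
    · exact Set.Finite.prod (Finset.finite_toSet _) (Finset.finite_toSet _)
  refine ⟨hfin.toFinset, ?_, ?_⟩
  · intro n hn
    simp only [Set.Finite.mem_toFinset, hs, Set.mem_setOf_eq]
    exact ⟨List.mem_map_of_mem (f := f) hn, List.mem_map_of_mem (f := g) hn⟩
  · intro x y hx hy
    simp only [Set.Finite.mem_toFinset, hs, Set.mem_setOf_eq] at hx hy ⊢
    constructor
    · rw [hfs]
      rcases le_total (f x) (f y) with h | h
      · rw [sup_eq_right.mpr h]; exact hy.1
      · rw [sup_eq_left.mpr h]; exact hx.1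
    · rw [hgs]
      rcases le_total (g x) (g y) with h | h
      · rw [sup_eq_right.mpr h]; exact hy.2
      · rw [sup_eq_left.mpr h]; exact hx.2

/-- Every zigzag in a convex chamber is `czig`-equal to a terminal staircase. -/
lemma norm (C : Chamber F J) (hconv : PosetConvex J) (f : P → A) (g : P → B)
    (hle : ∀ x y : P, x ≤ y ↔ f x ≤ f y ∧ g x ≤ g y)
    (hfs : ∀ x y : P, f (x ⊔ y) = f x ⊔ f y) (hgs : ∀ x y : P, g (x ⊔ y) = g x ⊔ g y)
    {x y : ↥J} (p : Zigzag (↥J) x y) :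
    ∃ p' : Zigzag (↥J) x y, czig C p' = czig C p ∧ Term p' := by
  obtain ⟨S, hmem, hsup⟩ := exists_grid f g hle hfs hgs (p.nodes.map (Subtype.val : ↥J → P))
  have hn : ∀ n ∈ p.nodes, (n : P) ∈ S := fun n hn =>
    hmem _ (List.mem_map_of_mem (f := (Subtype.val : ↥J → P)) hn)
  have H : ∀ (N : ℕ) {x y : ↥J} (p : Zigzag (↥J) x y),
      (∀ n ∈ p.nodes, (n : P) ∈ S) → nu S p ≤ N →
      ∃ p' : Zigzag (↥J) x y, czig C p' = czig C p ∧ Term p' := by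
    intro N
    induction N with
    | zero =>
      intro x y p hn hN
      rcases dichotomy C hconv S hsup p hn with ht | ⟨p', _, _, hlt⟩
      · exact ⟨p, rfl, ht⟩
      · omega
    | succ N ih =>
      intro x y p hn hN
      rcases dichotomy C hconv S hsup p hn with ht | ⟨p', hz, hnn, hlt⟩
      · exact ⟨p, rfl, ht⟩
      · obtain ⟨p'', hz', ht'⟩ := ih p' hnn (by omega)
        exact ⟨p'', hz'.trans hz, ht'⟩
  exact H (nu S p) p hn le_rfl

lemma tb_key (f : P → A)
    (hfs : ∀ x y : P, f (x ⊔ y) = f x ⊔ f y) (hmono : Monotone f)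
    (hcomp : ∀ w z : P, f w = f z → w ≤ z ∨ z ≤ w)
    {x v c c₂ Y : P} (hc : c = x ⊔ v) (hvc₂ : v ≤ c₂) (hc₂ : c₂ ≤ v ⊔ Y)
    (h1 : ¬ c ≤ c₂) (h2 : ¬ c₂ ≤ c) : f v ≤ f x ⊔ f Y := by
  by_contra hcon
  rw [not_le] at hcon
  have hfx : f x < f v := lt_of_le_of_lt le_sup_left hcon
  have hfY : f Y < f v := lt_of_le_of_lt le_sup_right hcon
  have hfc : f c = f v := by rw [hc, hfs]; exact sup_eq_right.mpr hfx.le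
  have hfc₂ : f c₂ = f v := by
    refine le_antisymm ?_ (hmono hvc₂)
    have := hmono hc₂
    rw [hfs] at this
    exact this.trans (sup_le le_rfl hfY.le)
  rcases hcomp c c₂ (hfc.trans hfc₂.symm) with h | h
  exacts [h1 h, h2 h]

/-- All nodes of a terminal staircase lie below the join of its endpoints. -/
lemma term_bound (f : P → A) (g : P → B)
    (hle : ∀ x y : P, x ≤ y ↔ f x ≤ f y ∧ g x ≤ g y)
    (hfs : ∀ x y : P, f (x ⊔ y) = f x ⊔ f y) (hgs : ∀ x y : P, g (x ⊔ y) = g x ⊔ g y) :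
    ∀ {x y : ↥J} (p : Zigzag (↥J) x y), Term p → ∀ n ∈ p.nodes, (n : P) ≤ ↑x ⊔ ↑y
  | x, _, .single _, _, n, hn => by
      simp [Zigzag.nodes] at hn; subst hn; exact le_sup_left
  | x, _, .consLe (b := c) h (.single _), _, n, hn => by
      simp [Zigzag.nodes] at hn
      rcases hn with rfl | rfl
      exacts [le_sup_left, le_sup_right]
  | x, _, .consGe (b := c) h (.single _), _, n, hn => by
      simp [Zigzag.nodes] at hn
      rcases hn with rfl | rfl
      exacts [le_sup_left, le_sup_right]
  | x, _, .consLe _ (.consLe _ _), ht, n, hn => False.elim ht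
  | x, _, .consGe _ (.consGe _ _), ht, n, hn => False.elim ht
  | x, _, .consLe (b := c) h₁ (.consGe (b := v) h₂ (.single _)), ht, n, hn => by
      obtain ⟨hxc, hvc, htight, _⟩ := ht
      simp only [Zigzag.nodes, List.mem_cons, List.mem_singleton, List.not_mem_nil,
        or_false] at hn
      rcases hn with rfl | rfl | rfl
      · exact le_sup_left
      · rw [htight]
      · exact le_sup_right
  | x, _, .consLe _ (.consGe _ (.consGe _ _)), ht, n, hn => False.elim ht.2.2.2
  | x, yy, .consLe (b := c) h₁ (.consGe (b := v) h₂ (.consLe (b := c₂) h₃ r)), ht, n, hn => by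
      obtain ⟨hxc, hvc, htight, hvx', hvc₂', hnc1, hnc2, ht''⟩ :
          x ≠ c ∧ v ≠ c ∧ (c : P) = ↑x ⊔ ↑v ∧ v ≠ c ∧ v ≠ c₂ ∧
            ¬((c : P) ≤ (c₂ : P)) ∧ ¬((c₂ : P) ≤ (c : P)) ∧ Term (.consLe h₃ r) := ht
      have IH := term_bound f g hle hfs hgs (.consLe h₃ r) ht''
      have hc₂b : (c₂ : P) ≤ ↑v ⊔ ↑yy := by
        apply IH
        simp [Zigzag.nodes, Zigzag.self_mem_nodes]
      have hvb : (v : P) ≤ ↑x ⊔ ↑yy := by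
        have hf := tb_key f hfs (pack_mono_f f g hle) (pack_comp f g hle)
          htight (h₃ : (v : P) ≤ c₂) hc₂b hnc1 hnc2
        have hcompg : ∀ u w : P, g u = g w → u ≤ w ∨ w ≤ u := by
          intro u w hg'
          rcases le_total (f u) (f w) with h | h
          · exact Or.inl ((hle u w).mpr ⟨h, hg'.le⟩)
          · exact Or.inr ((hle w u).mpr ⟨h, hg'.ge⟩)
        have hg := tb_key g hgs (fun _ _ h => ((hle _ _).mp h).2) hcompg
          htight (h₃ : (v : P) ≤ c₂) hc₂b hnc1 hnc2
        rw [hle]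
        exact ⟨by rw [hfs]; exact hf, by rw [hgs]; exact hg⟩
      simp only [Zigzag.nodes, List.mem_cons] at hn
      rcases hn with rfl | rfl | hn
      · exact le_sup_left
      · rw [htight]; exact sup_le le_sup_left hvb
      · have : (n : P) ≤ ↑v ⊔ ↑yy := IH n (by simp [Zigzag.nodes]; tauto)
        exact this.trans (sup_le hvb le_sup_right)
  | x, yy, .consGe (b := v) h₁ (.consLe (b := c₂) h₃ r), ht, n, hn => by
      obtain ⟨_, _, _, _, ht''⟩ := ht
      have IH := term_bound f g hle hfs hgs (.consLe h₃ r) ht''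
      simp only [Zigzag.nodes, List.mem_cons] at hn
      rcases hn with rfl | hn
      · exact le_sup_left
      · have : (n : P) ≤ ↑v ⊔ ↑yy := by
          apply IH
          simp [Zigzag.nodes] at hn ⊢; tauto
        exact this.trans (sup_le (le_trans (show (v:P) ≤ ↑x from h₁) le_sup_left) le_sup_right)

end PackSec
end S6

namespace S6
section DualSec
variable {F : Type} [Field F] {P : Type} [Lattice P] {J : Set P}

lemma Chamber.e_symm_symm (C : Chamber F J) {i j k : ↥J}
    (h₁ : (j : P) ≤ (i : P)) (h₂ : (k : P) ≤ (j : P)) (t : C.T i) :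
    (C.e h₂).symm ((C.e h₁).symm t) = (C.e (h₂.trans h₁)).symm t := by
  apply (C.e (h₂.trans h₁)).injective
  rw [LinearEquiv.apply_symm_apply, ← C.e_trans h₂ h₁, LinearEquiv.apply_symm_apply,
    LinearEquiv.apply_symm_apply]

def Jdual (J : Set P) : Set Pᵒᵈ := {x | OrderDual.ofDual x ∈ J}

def dsub (x : ↥J) : ↥(Jdual J) := ⟨OrderDual.toDual ↑x, x.2⟩
def usub (x : ↥(Jdual J)) : ↥J := ⟨OrderDual.ofDual ↑x, x.2⟩

@[simp] lemma usub_dsub (x : ↥J) : usub (dsub x) = x := rfl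

noncomputable def Chamber.dual (C : Chamber F J) : Chamber F (Jdual J) where
  T j := C.T (usub j)
  e {i j} h := (C.e (show ((usub j) : P) ≤ ((usub i) : P) from h)).symm
  e_trans {i j k} hij hjk t := C.e_symm_symm _ _ t

@[simp] lemma Chamber.dual_e (C : Chamber F J) {i j : ↥(Jdual J)} (h : (i : Pᵒᵈ) ≤ (j : Pᵒᵈ)) :
    C.dual.e h = (C.e (show ((usub j) : P) ≤ ((usub i) : P) from h)).symm := rfl

def flipZig : ∀ {x y : ↥J}, Zigzag (↥J) x y → Zigzag (↥(Jdual J)) (dsub x) (dsub y)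
  | _, _, .single x => .single (dsub x)
  | _, _, .consLe h p => .consGe (show dsub _ ≤ dsub _ from h) (flipZig p)
  | _, _, .consGe h p => .consLe (show dsub _ ≤ dsub _ from h) (flipZig p)

def unflipZig : ∀ {x y : ↥(Jdual J)}, Zigzag (↥(Jdual J)) x y → Zigzag (↥J) (usub x) (usub y)
  | _, _, .single x => .single (usub x)
  | _, _, .consLe h p => .consGe (show usub _ ≤ usub _ from h) (unflipZig p)
  | _, _, .consGe h p => .consLe (show usub _ ≤ usub _ from h) (unflipZig p)

variable (C : Chamber F J)

lemma czig_flip : ∀ {x y : ↥J} (p : Zigzag (↥J) x y),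
    czig C.dual (flipZig p) = czig C p
  | _, _, .single _ => rfl
  | _, _, .consLe h p => by
      ext t
      simp only [flipZig, czig_consLe, czig_consGe, Chamber.dual_e, LinearEquiv.symm_symm,
        LinearEquiv.trans_apply, czig_flip p]
      rfl
  | _, _, .consGe h p => by
      ext t
      simp only [flipZig, czig_consLe, czig_consGe, Chamber.dual_e, LinearEquiv.symm_symm,
        LinearEquiv.trans_apply, czig_flip p]
      rfl

lemma czig_unflip : ∀ {x y : ↥(Jdual J)} (r : Zigzag (↥(Jdual J)) x y),
    czig C (unflipZig r) = czig C.dual r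
  | _, _, .single _ => rfl
  | _, _, .consLe h r => by
      ext t
      simp only [unflipZig, czig_consLe, czig_consGe, Chamber.dual_e, LinearEquiv.symm_symm,
        LinearEquiv.trans_apply, czig_unflip r]
      rfl
  | _, _, .consGe h r => by
      ext t
      simp only [unflipZig, czig_consLe, czig_consGe, Chamber.dual_e, LinearEquiv.symm_symm,
        LinearEquiv.trans_apply, czig_unflip r]
      rfl

lemma nodes_unflip : ∀ {x y : ↥(Jdual J)} (r : Zigzag (↥(Jdual J)) x y),
    (unflipZig r).nodes = r.nodes.map usub
  | _, _, .single _ => rfl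
  | _, _, .consLe h r => by simp [unflipZig, Zigzag.nodes, nodes_unflip r]
  | _, _, .consGe h r => by simp [unflipZig, Zigzag.nodes, nodes_unflip r]

/-- The mirror of `Term`: all valleys tight (meets), consecutive lower nodes incomparable. -/
def TermD : ∀ {x y : ↥J}, Zigzag (↥J) x y → Prop
  | _, _, .single _ => True
  | x, _, .consLe (b := c) _ (.single _) => x ≠ c
  | x, _, .consGe (b := c) _ (.single _) => c ≠ x
  | _, _, .consLe _ (.consLe _ _) => False
  | _, _, .consGe _ (.consGe _ _) => False
  | x, _, .consGe (b := v) _ (.consLe (b := c) h₂ p) =>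
      v ≠ x ∧ v ≠ c ∧ (v : P) = ↑x ⊓ ↑c ∧ TermD (.consLe h₂ p)
  | x, _, .consLe (b := c) _ (.consGe (b := v) h₂ p) =>
      x ≠ c ∧ v ≠ c ∧ ¬((x : P) ≤ (v : P)) ∧ ¬((v : P) ≤ (x : P)) ∧ TermD (.consGe h₂ p)

lemma usub_injective : Function.Injective (usub (J := J)) := by
  intro a b h
  exact Subtype.ext (congrArg (fun z : ↥J => OrderDual.toDual (z : P)) h)

lemma termD_of_term : ∀ {x y : ↥(Jdual J)} (r : Zigzag (↥(Jdual J)) x y),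
    Term r → TermD (unflipZig r)
  | _, _, .single _, _ => trivial
  | _, _, .consLe (b := c) h (.single _), ht => by
      simp only [unflipZig, TermD]
      exact fun hh => ht (usub_injective hh).symm
  | _, _, .consGe (b := c) h (.single _), ht => by
      simp only [unflipZig, TermD]
      exact fun hh => ht (usub_injective hh).symm
  | _, _, .consLe _ (.consLe _ _), ht => False.elim ht
  | _, _, .consGe _ (.consGe _ _), ht => False.elim ht
  | x, _, .consLe (b := c) h₁ (.consGe (b := v) h₂ q), ht => by
      obtain ⟨h1, h2, h3, h4⟩ := ht
      refine ⟨fun hh => h1 (usub_injective hh).symm, fun hh => h2 (usub_injective hh).symm, ?_,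
        termD_of_term _ h4⟩
      exact h3
  | x, _, .consGe (b := v) h₁ (.consLe (b := c₂) h₂ q), ht => by
      obtain ⟨h1, h2, h3, h4, h5⟩ := ht
      exact ⟨fun hh => h1 (usub_injective hh).symm, fun hh => h2 (usub_injective hh).symm, h4, h3,
        termD_of_term _ h5⟩

variable {A B : Type} [LinearOrder A] [LinearOrder B]

/-- Meet-staircase normal form, with all nodes above the meet of the endpoints. -/
lemma normD (hconv : PosetConvex J) (f : P → A) (g : P → B)
    (hle : ∀ x y : P, x ≤ y ↔ f x ≤ f y ∧ g x ≤ g y)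
    (hfi : ∀ x y : P, f (x ⊓ y) = f x ⊓ f y) (hgi : ∀ x y : P, g (x ⊓ y) = g x ⊓ g y)
    {x y : ↥J} (q : Zigzag (↥J) x y) :
    ∃ q' : Zigzag (↥J) x y, czig C q' = czig C q ∧ TermD q' ∧
      (∀ n ∈ q'.nodes, (↑x ⊓ ↑y : P) ≤ (n : P)) := by
  have hconv' : PosetConvex (Jdual J) := by
    intro i hi k hk j h1 h2
    exact hconv _ hk _ hi j h2 h1
  have hle' : ∀ x y : Pᵒᵈ, x ≤ y ↔
      (OrderDual.toDual (f (OrderDual.ofDual x)) ≤ OrderDual.toDual (f (OrderDual.ofDual y)) ∧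
       OrderDual.toDual (g (OrderDual.ofDual x)) ≤ OrderDual.toDual (g (OrderDual.ofDual y))) := by
    intro u v
    exact hle (OrderDual.ofDual v) (OrderDual.ofDual u)
  obtain ⟨r, hz, htm⟩ := norm (A := Aᵒᵈ) (B := Bᵒᵈ) C.dual hconv'
    (fun x => OrderDual.toDual (f (OrderDual.ofDual x)))
    (fun x => OrderDual.toDual (g (OrderDual.ofDual x)))
    hle' (fun u v => hfi (OrderDual.ofDual u) (OrderDual.ofDual v))
    (fun u v => hgi (OrderDual.ofDual u) (OrderDual.ofDual v)) (flipZig q)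
  have hbd := term_bound (J := Jdual J)
    (fun x => OrderDual.toDual (f (OrderDual.ofDual x)))
    (fun x => OrderDual.toDual (g (OrderDual.ofDual x)))
    hle' (fun u v => hfi (OrderDual.ofDual u) (OrderDual.ofDual v))
    (fun u v => hgi (OrderDual.ofDual u) (OrderDual.ofDual v)) r htm
  refine ⟨unflipZig r, ?_, termD_of_term r htm, ?_⟩
  · exact (czig_unflip C r).trans (hz.trans (czig_flip C q))
  · intro n hn
    replace hn : n ∈ r.nodes.map usub := by rw [← nodes_unflip r]; exact hn
    obtain ⟨m, hm, rfl⟩ := List.mem_map.mp hn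
    exact hbd m hm

/-- Join-staircase normal form, with all nodes below the join of the endpoints. -/
lemma normU (hconv : PosetConvex J) (f : P → A) (g : P → B)
    (hle : ∀ x y : P, x ≤ y ↔ f x ≤ f y ∧ g x ≤ g y)
    (hfs : ∀ x y : P, f (x ⊔ y) = f x ⊔ f y) (hgs : ∀ x y : P, g (x ⊔ y) = g x ⊔ g y)
    {x y : ↥J} (p : Zigzag (↥J) x y) :
    ∃ p' : Zigzag (↥J) x y, czig C p' = czig C p ∧ Term p' ∧
      (∀ n ∈ p'.nodes, (n : P) ≤ (↑x ⊔ ↑y : P)) := by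
  obtain ⟨p', hz, ht⟩ := norm C hconv f g hle hfs hgs p
  exact ⟨p', hz, ht, term_bound f g hle hfs hgs p' ht⟩

end DualSec
end S6

namespace S6
section LALC
variable {F : Type} [Field F] {P : Type} [Lattice P]
variable {A B : Type} [LinearOrder A] [LinearOrder B]
variable (M : PersistenceModule F P)

/-- L-A: transport of the crossing maps into a fixed upper point along any zigzag. -/
lemma LA {J : Set P} (hconv : PosetConvex J)
    (hiso : ∀ (i j : ↥J) (h : i ≤ j), Function.Bijective ((M.restrict J).map h))
    (f : P → A) (g : P → B)
    (hle : ∀ x y : P, x ≤ y ↔ f x ≤ f y ∧ g x ≤ g y)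
    (hfs : ∀ x y : P, f (x ⊔ y) = f x ⊔ f y) (hgs : ∀ x y : P, g (x ⊔ y) = g x ⊔ g y)
    {α α' : ↥J} (p : Zigzag (↥J) α α') {c : P} (hc : (α : P) ≤ c) (hc' : (α' : P) ≤ c)
    (t : M.V ↑α) :
    M.map hc' (czig (chamberOf M J hiso) p t) = M.map hc t := by
  obtain ⟨p', hz, ht, hbd⟩ := normU (chamberOf M J hiso) hconv f g hle hfs hgs p
  rw [← hz]
  refine cone_transport (chamberOf M J hiso) (W := M.V c)
    (fun x h => M.map h) ?_ p' (fun n hn => (hbd n hn).trans (sup_le hc hc')) hc hc' t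
  intro x y hxy hyc u
  have h2 := LinearMap.congr_fun (M.map_comp hxy hyc) u
  exact h2

/-- L-C: transport of the crossing maps from a fixed lower point along any zigzag. -/
lemma LC {J : Set P} (hconv : PosetConvex J)
    (hiso : ∀ (i j : ↥J) (h : i ≤ j), Function.Bijective ((M.restrict J).map h))
    (f : P → A) (g : P → B)
    (hle : ∀ x y : P, x ≤ y ↔ f x ≤ f y ∧ g x ≤ g y)
    (hfi : ∀ x y : P, f (x ⊓ y) = f x ⊓ f y) (hgi : ∀ x y : P, g (x ⊓ y) = g x ⊓ g y)
    {β β' : ↥J} (q : Zigzag (↥J) β β') {c : P} (hc : c ≤ (β : P)) (hc' : c ≤ (β' : P))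
    (t : M.V c) :
    czig (chamberOf M J hiso) q (M.map hc t) = M.map hc' t := by
  obtain ⟨q', hz, ht, hbd⟩ := normD (chamberOf M J hiso) hconv f g hle hfi hgi q
  rw [← hz]
  refine cocone_transport (chamberOf M J hiso) (W := M.V c)
    (fun x h => M.map h) ?_ q' (fun n hn => (le_inf hc hc').trans (hbd n hn)) hc hc' t
  intro x y hxy hcx u
  have h2 := LinearMap.congr_fun (M.map_comp hcx hxy) u
  exact h2

variable {J₁ J₂ : Set P}
variable (hiso₁ : ∀ (i j : ↥J₁) (h : i ≤ j), Function.Bijective ((M.restrict J₁).map h))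
variable (hiso₂ : ∀ (i j : ↥J₂) (h : i ≤ j), Function.Bijective ((M.restrict J₂).map h))

/-- The statement of the commuting square for all zigzags with given endpoints. -/
def GSQ (α : ↥J₁) (β : ↥J₂) (α' : ↥J₁) (β' : ↥J₂) : Prop :=
  ∀ (h : (α : P) ≤ ↑β) (h' : (α' : P) ≤ ↑β')
    (p : Zigzag (↥J₁) α α') (q : Zigzag (↥J₂) β β') (t : M.V ↑α),
    czig (chamberOf M J₂ hiso₂) q (M.map h t) = M.map h' (czig (chamberOf M J₁ hiso₁) p t)

lemma GSQ_easy (hconv₁ : PosetConvex J₁) (hconv₂ : PosetConvex J₂)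
    (f : P → A) (g : P → B)
    (hle : ∀ x y : P, x ≤ y ↔ f x ≤ f y ∧ g x ≤ g y)
    (hfs : ∀ x y : P, f (x ⊔ y) = f x ⊔ f y) (hgs : ∀ x y : P, g (x ⊔ y) = g x ⊔ g y)
    (hfi : ∀ x y : P, f (x ⊓ y) = f x ⊓ f y) (hgi : ∀ x y : P, g (x ⊓ y) = g x ⊓ g y)
    {α : ↥J₁} {β : ↥J₂} {α' : ↥J₁} {β' : ↥J₂}
    (hez : (α : P) ≤ ↑β' ∨ (α' : P) ≤ ↑β) :
    GSQ M hiso₁ hiso₂ α β α' β' := by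
  intro h h' p q t
  rcases hez with he | he
  · rw [LC M hconv₂ hiso₂ f g hle hfi hgi q h he t,
      LA M hconv₁ hiso₁ f g hle hfs hgs p he h' t]
  · have h1 := LA M hconv₁ hiso₁ f g hle hfs hgs p h he t
    rw [← h1]; exact LC M hconv₂ hiso₂ f g hle hfi hgi q he h' _

lemma GSQ_comp (hconn₁ : ZigzagConnected J₁) (hconn₂ : ZigzagConnected J₂)
    {α : ↥J₁} {β : ↥J₂} {X : ↥J₁} {Y : ↥J₂} {α' : ↥J₁} {β' : ↥J₂}
    (hXY : (X : P) ≤ ↑Y)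
    (G1 : GSQ M hiso₁ hiso₂ α β X Y) (G2 : GSQ M hiso₁ hiso₂ X Y α' β') :
    GSQ M hiso₁ hiso₂ α β α' β' := by
  intro h h' p q t
  obtain ⟨r⟩ := hconn₁ α X
  obtain ⟨σ⟩ := hconn₂ β Y
  have g1 := G1 h hXY r σ t
  have g2 := G2 hXY h' (r.rev.cat p) (σ.rev.cat q) (czig (chamberOf M J₁ hiso₁) r t)
  rw [czig_cat, czig_cat, czig_rev, czig_rev] at g2
  simp only [LinearEquiv.trans_apply] at g2
  rw [← g1] at g2
  exact (congrArg (czig (chamberOf M J₂ hiso₂) q) (LinearEquiv.symm_apply_apply _ _).symm).trans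
    (g2.trans (congrArg (fun v => M.map h' (czig (chamberOf M J₁ hiso₁) p v))
      (LinearEquiv.symm_apply_apply _ _)))

end LALC
end S6

namespace S6
section OrientSec
variable {F : Type} [Field F] {P : Type} [Lattice P] {J : Set P}
variable {A B : Type} [LinearOrder A] [LinearOrder B]

lemma pack_comp_g (f : P → A) (g : P → B)
    (hle : ∀ x y : P, x ≤ y ↔ f x ≤ f y ∧ g x ≤ g y) :
    ∀ w z : P, g w = g z → w ≤ z ∨ z ≤ w := by
  intro w z hg
  rcases le_total (f w) (f z) with h | h
  · exact Or.inl ((hle w z).mpr ⟨h, hg.le⟩)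
  · exact Or.inr ((hle z w).mpr ⟨h, hg.ge⟩)

lemma pack_incomp (f : P → A) (g : P → B)
    (hle : ∀ x y : P, x ≤ y ↔ f x ≤ f y ∧ g x ≤ g y)
    {u w : P} (h1 : ¬ u ≤ w) (h2 : ¬ w ≤ u) :
    (f w < f u ∧ g u < g w) ∨ (f u < f w ∧ g w < g u) := by
  rcases lt_trichotomy (f u) (f w) with h | h | h
  · right
    refine ⟨h, ?_⟩
    by_contra hg
    exact h1 ((hle u w).mpr ⟨h.le, not_lt.mp hg⟩)
  · rcases pack_comp f g hle u w h with hc | hc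
    exacts [absurd hc h1, absurd hc h2]
  · left
    refine ⟨h, ?_⟩
    by_contra hg
    exact h2 ((hle w u).mpr ⟨h.le, not_lt.mp hg⟩)

/-- Left-up orientation of a (Term-shaped) staircase: at every tooth
`x ≤ c ≥ v` the later valley `v` is strictly smaller in `f` and larger in `g`. -/
def OrL (f : P → A) (g : P → B) : ∀ {x y : ↥J}, Zigzag (↥J) x y → Prop
  | _, _, .single _ => True
  | _, _, .consLe _ (.single _) => True
  | _, _, .consGe _ (.single _) => True
  | _, _, .consLe _ (.consLe _ _) => True
  | _, _, .consGe _ (.consGe _ _) => True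
  | x, _, .consLe _ (.consGe (b := v) h₂ p) =>
      f ↑v < f ↑x ∧ g ↑x < g ↑v ∧ OrL f g (.consGe h₂ p)
  | _, _, .consGe _ (.consLe h₂ p) => OrL f g (.consLe h₂ p)

variable (f : P → A) (g : P → B)

lemma term_incomp_xv
    (hle : ∀ x y : P, x ≤ y ↔ f x ≤ f y ∧ g x ≤ g y)
    {x c v : ↥J} (hxc : x ≠ c) (hvc : v ≠ c) (htight : (c : P) = ↑x ⊔ ↑v) :
    (f ↑v < f ↑x ∧ g ↑x < g ↑v) ∨ (f ↑x < f ↑v ∧ g ↑v < g ↑x) := by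
  have h1 : ¬ (x : P) ≤ ↑v := by
    intro hh
    exact hvc (Subtype.ext (by rw [htight, sup_eq_right.mpr hh])).symm
  have h2 : ¬ (v : P) ≤ ↑x := by
    intro hh
    exact hxc (Subtype.ext (by rw [htight, sup_eq_left.mpr hh])).symm
  exact pack_incomp f g hle h1 h2

/-- The "wrong" orientation forces a strict `g`-descent to the right endpoint. -/
lemma A2 (hle : ∀ x y : P, x ≤ y ↔ f x ≤ f y ∧ g x ≤ g y)
    (hfs : ∀ x y : P, f (x ⊔ y) = f x ⊔ f y) (hgs : ∀ x y : P, g (x ⊔ y) = g x ⊔ g y) :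
    ∀ {x c v y : ↥J} (h₁ : x ≤ c) (h₂ : v ≤ c) (q : Zigzag (↥J) v y),
      Term (.consLe h₁ (.consGe h₂ q)) → OrL g f (.consLe h₁ (.consGe h₂ q)) →
      g ↑y < g ↑x
  | x, c, v, _, h₁, h₂, .single _, ht, hor => hor.1
  | x, c, v, _, h₁, h₂, .consLe (b := c₂) h₃ (.single _), ht, hor => by
      obtain ⟨hxc, hvc, htight, _, hvc₂, hnc1, hnc2, _⟩ :
          x ≠ c ∧ v ≠ c ∧ (c : P) = ↑x ⊔ ↑v ∧ v ≠ c ∧ v ≠ c₂ ∧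
            ¬((c : P) ≤ (c₂ : P)) ∧ ¬((c₂ : P) ≤ (c : P)) ∧ Term (.consLe h₃ (.single _)) := ht
      obtain ⟨hgv, hfx, _⟩ := hor
      have hfc : f ↑c = f ↑v := by
        rw [htight, hfs]; exact sup_eq_right.mpr hfx.le
      have hfcc : f ↑c ≤ f ↑c₂ := by
        rw [hfc]; exact ((hle _ _).mp (h₃ : (v : P) ≤ ↑c₂)).1
      have hgcc : g ↑c₂ < g ↑c := by
        by_contra hgg
        exact hnc1 ((hle _ _).mpr ⟨hfcc, not_lt.mp hgg⟩)
      have hgc : g ↑c = g ↑x := by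
        rw [htight, hgs]; exact sup_eq_left.mpr hgv.le
      rw [← hgc]; exact hgcc
  | x, c, v, _, h₁, h₂, .consLe (b := c₂) h₃ (.consGe (b := v₂) h₄ r₂), ht, hor => by
      have htq : Term (.consLe h₃ (.consGe h₄ r₂)) := ht.2.2.2.2.2.2.2
      have horq : OrL g f (.consLe h₃ (.consGe h₄ r₂)) := hor.2.2
      have IH := A2 hle hfs hgs h₃ h₄ r₂ htq horq
      exact IH.trans hor.1
  | x, c, v, _, h₁, h₂, .consGe h₃ r, ht, hor => False.elim ht.2.2.2

/-- Every terminal staircase is oriented one way or the other. -/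
lemma A1 (hle : ∀ x y : P, x ≤ y ↔ f x ≤ f y ∧ g x ≤ g y)
    (hfs : ∀ x y : P, f (x ⊔ y) = f x ⊔ f y) (hgs : ∀ x y : P, g (x ⊔ y) = g x ⊔ g y) :
    ∀ {x y : ↥J} (p : Zigzag (↥J) x y), Term p → OrL f g p ∨ OrL g f p
  | _, _, .single _, _ => Or.inl trivial
  | _, _, .consLe _ (.single _), _ => Or.inl trivial
  | _, _, .consGe _ (.single _), _ => Or.inl trivial
  | _, _, .consLe _ (.consLe _ _), ht => False.elim ht
  | _, _, .consGe _ (.consGe _ _), ht => False.elim ht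
  | x, _, .consGe h₁ (.consLe h₂ r), ht => by
      rcases A1 hle hfs hgs (.consLe h₂ r) ht.2.2.2.2 with h | h
      · exact Or.inl h
      · exact Or.inr h
  | x, _, .consLe (b := c) h₁ (.consGe (b := v) h₂ (.single _)), ht => by
      obtain ⟨hxc, hvc, htight, _⟩ := ht
      rcases term_incomp_xv f g hle hxc hvc htight with hd | hd
      · exact Or.inl ⟨hd.1, hd.2, trivial⟩
      · exact Or.inr ⟨hd.2, hd.1, trivial⟩
  | x, _, .consLe (b := c) h₁ (.consGe (b := v) h₂ (.consLe (b := c₂) h₃ (.single _))), ht => by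
      obtain ⟨hxc, hvc, htight, rest⟩ := ht
      rcases term_incomp_xv f g hle hxc hvc htight with hd | hd
      · exact Or.inl ⟨hd.1, hd.2, trivial⟩
      · exact Or.inr ⟨hd.2, hd.1, trivial⟩
  | x, _, .consLe (b := c) h₁
      (.consGe (b := v) h₂ (.consLe (b := c₂) h₃ (.consGe (b := v₂) h₄ r₂))), ht => by
      obtain ⟨hxc, hvc, htight, _, _, hnc1, hnc2, htq⟩ :
          x ≠ c ∧ v ≠ c ∧ (c : P) = ↑x ⊔ ↑v ∧ v ≠ c ∧ v ≠ c₂ ∧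
            ¬((c : P) ≤ (c₂ : P)) ∧ ¬((c₂ : P) ≤ (c : P)) ∧
            Term (.consLe h₃ (.consGe h₄ r₂)) := ht
      have htight₂ : (c₂ : P) = ↑v ⊔ ↑v₂ := htq.2.2.1
      rcases term_incomp_xv f g hle hxc hvc htight with hd | hd
      · rcases A1 hle hfs hgs (.consLe h₃ (.consGe h₄ r₂)) htq with hi | hi
        · exact Or.inl ⟨hd.1, hd.2, hi⟩
        · exfalso
          obtain ⟨hgv₂, hfv, _⟩ := hi
          have e1 : g ↑c = g ↑v := by rw [htight, hgs]; exact sup_eq_right.mpr hd.2.le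
          have e2 : g ↑c₂ = g ↑v := by rw [htight₂, hgs]; exact sup_eq_left.mpr hgv₂.le
          rcases pack_comp_g f g hle (↑c) (↑c₂) (e1.trans e2.symm) with hc | hc
          exacts [hnc1 hc, hnc2 hc]
      · rcases A1 hle hfs hgs (.consLe h₃ (.consGe h₄ r₂)) htq with hi | hi
        · exfalso
          obtain ⟨hfv₂, hgv, _⟩ := hi
          have e1 : f ↑c = f ↑v := by rw [htight, hfs]; exact sup_eq_right.mpr hd.1.le
          have e2 : f ↑c₂ = f ↑v := by rw [htight₂, hfs]; exact sup_eq_left.mpr hfv₂.le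
          rcases pack_comp f g hle (↑c) (↑c₂) (e1.trans e2.symm) with hc | hc
          exacts [hnc1 hc, hnc2 hc]
        · exact Or.inr ⟨hd.2, hd.1, hi⟩
  | x, _, .consLe _ (.consGe _ (.consLe _ (.consLe _ _))), ht =>
      False.elim ht.2.2.2.2.2.2.2
  | x, _, .consLe _ (.consGe _ (.consGe _ _)), ht => False.elim ht.2.2.2

/-- Anchored orientation: if `g` strictly increases from `x` to `y`,
a terminal staircase is left-up oriented. -/
lemma main_or (hle : ∀ x y : P, x ≤ y ↔ f x ≤ f y ∧ g x ≤ g y)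
    (hfs : ∀ x y : P, f (x ⊔ y) = f x ⊔ f y) (hgs : ∀ x y : P, g (x ⊔ y) = g x ⊔ g y) :
    ∀ {x y : ↥J} (p : Zigzag (↥J) x y), Term p → g ↑x < g ↑y → OrL f g p
  | _, _, .single _, _, _ => trivial
  | _, _, .consLe _ (.single _), _, _ => trivial
  | _, _, .consGe _ (.single _), _, _ => trivial
  | _, _, .consLe _ (.consLe _ _), ht, _ => False.elim ht
  | _, _, .consGe _ (.consGe _ _), ht, _ => False.elim ht
  | x, _, .consGe (b := v) h₁ (.consLe h₂ r), ht, hg => by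
      show OrL f g (.consLe h₂ r)
      refine main_or hle hfs hgs (.consLe h₂ r) ht.2.2.2.2 ?_
      exact lt_of_le_of_lt (((hle _ _).mp (h₁ : (v : P) ≤ ↑x)).2) hg
  | x, _, .consLe (b := c) h₁ (.consGe (b := v) h₂ q), ht, hg => by
      rcases A1 f g hle hfs hgs (.consLe h₁ (.consGe h₂ q)) ht with h | h
      · exact h
      · exact absurd hg (not_lt.mpr (A2 f g hle hfs hgs h₁ h₂ q ht h).le)

section Tails
variable {f g}

lemma term_tail_Le {x c y : ↥J} (h : x ≤ c) (q : Zigzag (↥J) c y) :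
    Term (.consLe h q) → Term q := by
  cases q with
  | single _ => exact fun _ => trivial
  | consLe _ _ => exact fun ht => False.elim ht
  | consGe _ _ => exact fun ht => ht.2.2.2

lemma term_tail_Ge {x v y : ↥J} (h : v ≤ x) (q : Zigzag (↥J) v y) :
    Term (.consGe h q) → Term q := by
  cases q with
  | single _ => exact fun _ => trivial
  | consLe _ _ => exact fun ht => ht.2.2.2.2
  | consGe _ _ => exact fun ht => False.elim ht

lemma orl_tail_Le {x c y : ↥J} (h : x ≤ c) (q : Zigzag (↥J) c y)
    (ht : Term (.consLe h q)) : OrL f g (.consLe h q) → OrL f g q := by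
  cases q with
  | single _ => exact fun _ => trivial
  | consLe _ _ => exact fun _ => False.elim ht
  | consGe _ _ => exact fun ho => ho.2.2

lemma orl_tail_Ge {x v y : ↥J} (h : v ≤ x) (q : Zigzag (↥J) v y)
    (ht : Term (.consGe h q)) : OrL f g (.consGe h q) → OrL f g q := by
  cases q with
  | single _ => exact fun _ => trivial
  | consLe _ _ => exact fun ho => ho
  | consGe _ _ => exact fun _ => False.elim ht

lemma termD_tail_Le {x c y : ↥J} (h : x ≤ c) (q : Zigzag (↥J) c y) :
    TermD (.consLe h q) → TermD q := by
  cases q with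
  | single _ => exact fun _ => trivial
  | consLe _ _ => exact fun ht => False.elim ht
  | consGe _ _ => exact fun ht => ht.2.2.2.2

lemma termD_tail_Ge {x v y : ↥J} (h : v ≤ x) (q : Zigzag (↥J) v y) :
    TermD (.consGe h q) → TermD q := by
  cases q with
  | single _ => exact fun _ => trivial
  | consLe _ _ => exact fun ht => ht.2.2.2
  | consGe _ _ => exact fun ht => False.elim ht

end Tails
end OrientSec
end S6

namespace S6
section OrientDual
variable {F : Type} [Field F] {P : Type} [Lattice P] {J : Set P}
variable {A B : Type} [LinearOrder A] [LinearOrder B]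

/-- Left-up orientation of a meet-staircase (`TermD`-shaped): at every anti-tooth
`x ≥ v ≤ c`, the later upper node `c` is strictly smaller in `f`, larger in `g`. -/
def OrD (f : P → A) (g : P → B) : ∀ {x y : ↥J}, Zigzag (↥J) x y → Prop
  | _, _, .single _ => True
  | _, _, .consLe _ (.single _) => True
  | _, _, .consGe _ (.single _) => True
  | _, _, .consLe _ (.consLe _ _) => True
  | _, _, .consGe _ (.consGe _ _) => True
  | x, _, .consGe _ (.consLe (b := c) h₂ p) =>
      f ↑c < f ↑x ∧ g ↑x < g ↑c ∧ OrD f g (.consLe h₂ p)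
  | _, _, .consLe _ (.consGe h₂ p) => OrD f g (.consGe h₂ p)

variable (f : P → A) (g : P → B)

lemma orD_of_dual :
    ∀ {x y : ↥(Jdual J)} (r : Zigzag (↥(Jdual J)) x y),
      OrL (fun u => OrderDual.toDual (g (OrderDual.ofDual u)))
          (fun u => OrderDual.toDual (f (OrderDual.ofDual u))) r →
      OrD f g (unflipZig r)
  | _, _, .single _, _ => trivial
  | _, _, .consLe _ (.single _), _ => trivial
  | _, _, .consGe _ (.single _), _ => trivial
  | _, _, .consLe _ (.consLe _ _), _ => trivial
  | _, _, .consGe _ (.consGe _ _), _ => trivial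
  | x, _, .consLe _ (.consGe (b := v) h₂ p), hor => by
      obtain ⟨h1, h2, h3⟩ := hor
      exact ⟨h2, h1, orD_of_dual (.consGe h₂ p) h3⟩
  | _, _, .consGe _ (.consLe h₂ p), hor =>
      orD_of_dual (.consLe h₂ p) hor

lemma orD_tail_Le {x c y : ↥J} (h : x ≤ c) (q : Zigzag (↥J) c y)
    (ht : TermD (.consLe h q)) : OrD f g (.consLe h q) → OrD f g q := by
  cases q with
  | single _ => exact fun _ => trivial
  | consLe _ _ => exact fun _ => False.elim ht
  | consGe _ _ => exact fun ho => ho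

lemma orD_tail_Ge {x v y : ↥J} (h : v ≤ x) (q : Zigzag (↥J) v y)
    (ht : TermD (.consGe h q)) : OrD f g (.consGe h q) → OrD f g q := by
  cases q with
  | single _ => exact fun _ => trivial
  | consLe _ _ => exact fun ho => ho.2.2
  | consGe _ _ => exact fun _ => False.elim ht

variable (C : Chamber F J)

lemma normU_or (hconv : PosetConvex J)
    (hle : ∀ x y : P, x ≤ y ↔ f x ≤ f y ∧ g x ≤ g y)
    (hfs : ∀ x y : P, f (x ⊔ y) = f x ⊔ f y) (hgs : ∀ x y : P, g (x ⊔ y) = g x ⊔ g y)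
    {x y : ↥J} (p : Zigzag (↥J) x y) (hanch : g ↑x < g ↑y) :
    ∃ p' : Zigzag (↥J) x y, czig C p' = czig C p ∧ Term p' ∧ OrL f g p' ∧
      (∀ n ∈ p'.nodes, (n : P) ≤ (↑x ⊔ ↑y : P)) := by
  obtain ⟨p', hz, ht, hbd⟩ := normU C hconv f g hle hfs hgs p
  exact ⟨p', hz, ht, main_or f g hle hfs hgs p' ht hanch, hbd⟩

lemma normD_or (hconv : PosetConvex J)
    (hle : ∀ x y : P, x ≤ y ↔ f x ≤ f y ∧ g x ≤ g y)
    (hfi : ∀ x y : P, f (x ⊓ y) = f x ⊓ f y) (hgi : ∀ x y : P, g (x ⊓ y) = g x ⊓ g y)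
    {x y : ↥J} (q : Zigzag (↥J) x y) (hanch : f ↑y < f ↑x) :
    ∃ q' : Zigzag (↥J) x y, czig C q' = czig C q ∧ TermD q' ∧ OrD f g q' ∧
      (∀ n ∈ q'.nodes, (↑x ⊓ ↑y : P) ≤ (n : P)) := by
  have hconv' : PosetConvex (Jdual J) := by
    intro i hi k hk j h1 h2
    exact hconv _ hk _ hi j h2 h1
  have hle' : ∀ u v : Pᵒᵈ, u ≤ v ↔
      (OrderDual.toDual (g (OrderDual.ofDual u)) ≤ OrderDual.toDual (g (OrderDual.ofDual v)) ∧
       OrderDual.toDual (f (OrderDual.ofDual u)) ≤ OrderDual.toDual (f (OrderDual.ofDual v))) := by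
    intro u v
    exact (hle (OrderDual.ofDual v) (OrderDual.ofDual u)).trans and_comm
  obtain ⟨r, hz, htm⟩ := norm (A := Bᵒᵈ) (B := Aᵒᵈ) C.dual hconv'
    (fun u => OrderDual.toDual (g (OrderDual.ofDual u)))
    (fun u => OrderDual.toDual (f (OrderDual.ofDual u)))
    hle' (fun u v => hgi (OrderDual.ofDual u) (OrderDual.ofDual v))
    (fun u v => hfi (OrderDual.ofDual u) (OrderDual.ofDual v)) (flipZig q)
  have hbd := term_bound (J := Jdual J)
    (fun u => OrderDual.toDual (g (OrderDual.ofDual u)))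
    (fun u => OrderDual.toDual (f (OrderDual.ofDual u)))
    hle' (fun u v => hgi (OrderDual.ofDual u) (OrderDual.ofDual v))
    (fun u v => hfi (OrderDual.ofDual u) (OrderDual.ofDual v)) r htm
  have hor := main_or (J := Jdual J)
    (fun u => OrderDual.toDual (g (OrderDual.ofDual u)))
    (fun u => OrderDual.toDual (f (OrderDual.ofDual u)))
    hle' (fun u v => hgi (OrderDual.ofDual u) (OrderDual.ofDual v))
    (fun u v => hfi (OrderDual.ofDual u) (OrderDual.ofDual v)) r htm
    (show OrderDual.toDual (f ↑x) < OrderDual.toDual (f ↑y) from hanch)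
  refine ⟨unflipZig r, ?_, termD_of_term r htm, orD_of_dual f g r hor, ?_⟩
  · exact (czig_unflip C r).trans (hz.trans (czig_flip C q))
  · intro n hn
    replace hn : n ∈ r.nodes.map usub := by rw [← nodes_unflip r]; exact hn
    obtain ⟨m, hm, rfl⟩ := List.mem_map.mp hn
    exact hbd m hm

end OrientDual
end S6

namespace S6
section WalkSec
variable {F : Type} [Field F] {P : Type} [Lattice P]
variable {A B : Type} [LinearOrder A] [LinearOrder B]
variable {J₁ J₂ : Set P}
variable (f : P → A) (g : P → B)

/-- Walk along the meet-staircase in `J₂` to find a node above a given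
vertical segment `[v, U]` of `J₁`. -/
lemma step (hdisj : Disjoint J₁ J₂) (hconv₁ : PosetConvex J₁) (hconv₂ : PosetConvex J₂)
    (hle : ∀ x y : P, x ≤ y ↔ f x ≤ f y ∧ g x ≤ g y)
    (hfi : ∀ x y : P, f (x ⊓ y) = f x ⊓ f y) (hgi : ∀ x y : P, g (x ⊓ y) = g x ⊓ g y) :
    ∀ {z₀ b' : ↥J₂} (R : Zigzag (↥J₂) z₀ b'), TermD R → OrD f g R →
    ∀ (v U : ↥J₁), (v : P) ≤ ↑U → f ↑U = f ↑v → (v : P) ≤ ↑z₀ → g ↑U ≤ g ↑b' →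
    ∃ (m : ↥J₂) (R' : Zigzag (↥J₂) m b'), TermD R' ∧ OrD f g R' ∧ (U : P) ≤ ↑m
  | _, _, .single z, _, _, v, U, hvU, hfvU, hvz, hgU => by
      refine ⟨z, .single z, trivial, trivial, (hle _ _).mpr ⟨?_, hgU⟩⟩
      rw [hfvU]
      exact ((hle _ _).mp hvz).1
  | _, _, .consLe (b := c₁) h R₁, hT, hOr, v, U, hvU, hfvU, hvz, hgU =>
      step hdisj hconv₁ hconv₂ hle hfi hgi R₁
        (termD_tail_Le h R₁ hT) (orD_tail_Le f g h R₁ hT hOr)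
        v U hvU hfvU (hvz.trans (h : (_ : P) ≤ ↑c₁)) hgU
  | z₀, _, .consGe (b := w) h (.single _), hT, hOr, v, U, hvU, hfvU, hvz, hgU => by
      have hUz : (U : P) ≤ ↑z₀ := by
        apply (hle _ _).mpr
        constructor
        · rw [hfvU]; exact ((hle _ _).mp hvz).1
        · by_contra hgg
          have h1 : g ↑z₀ < g ↑U := not_le.mp hgg
          have h2 : g (↑w : P) ≤ g ↑z₀ := ((hle _ _).mp (h : (↑w : P) ≤ ↑z₀)).2
          exact absurd (hgU.trans h2) (not_le.mpr h1)
      exact ⟨z₀, .consGe h (.single _), hT, hOr, hUz⟩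
  | z₀, b'', .consGe (b := w) h (.consLe (b := c₁) h₂ R₂), hT, hOr, v, U, hvU, hfvU, hvz, hgU => by
      obtain ⟨hwz, hwc, hwt, hT₂⟩ := hT
      obtain ⟨hfc, hgc, hOr₂⟩ := hOr
      by_cases hUz : (U : P) ≤ ↑z₀
      · exact ⟨z₀, .consGe h (.consLe h₂ R₂), ⟨hwz, hwc, hwt, hT₂⟩, ⟨hfc, hgc, hOr₂⟩, hUz⟩
      have hfUz : f ↑U ≤ f ↑z₀ := by rw [hfvU]; exact ((hle _ _).mp hvz).1
      have hgz : g ↑z₀ < g ↑U := by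
        by_contra hgg
        exact hUz ((hle _ _).mpr ⟨hfUz, not_lt.mp hgg⟩)
      by_cases hfvc : f ↑v ≤ f ↑c₁
      · have hvc : (v : P) ≤ ↑c₁ :=
          (hle _ _).mpr ⟨hfvc, (((hle _ _).mp hvz).2).trans hgc.le⟩
        exact step hdisj hconv₁ hconv₂ hle hfi hgi R₂
          (termD_tail_Le h₂ R₂ hT₂) (orD_tail_Le f g h₂ R₂ hT₂ hOr₂)
          v U hvU hfvU hvc hgU
      · exfalso
        set u : P := ↑U ⊓ ↑z₀ with hu
        have hfu : f u = f ↑v := by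
          rw [hu, hfi, inf_eq_left.mpr hfUz, hfvU]
        have hgu : g u = g ↑z₀ := by
          rw [hu, hgi, inf_eq_right.mpr hgz.le]
        have hvu : (v : P) ≤ u :=
          (hle _ _).mpr ⟨hfu.ge, (((hle _ _).mp hvz).2).trans hgu.ge⟩
        have hu1 : u ∈ J₁ := hconv₁ ↑v v.2 ↑U U.2 u hvu inf_le_left
        have hwu : (↑w : P) ≤ u := by
          apply (hle _ _).mpr
          constructor
          · rw [hwt, hfi, hfu]
            exact (inf_le_right).trans (not_le.mp hfvc).le
          · rw [hwt, hgi, hgu]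
            exact inf_le_left
        have hu2 : u ∈ J₂ := hconv₂ ↑w w.2 ↑z₀ z₀.2 u hwu inf_le_right
        exact Set.disjoint_left.mp hdisj hu1 hu2
  | _, _, .consGe _ (.consGe _ _), hT, _, _, _, _, _, _, _ => False.elim hT

variable (M : PersistenceModule F P)
variable (hiso₁ : ∀ (i j : ↥J₁) (h : i ≤ j), Function.Bijective ((M.restrict J₁).map h))
variable (hiso₂ : ∀ (i j : ↥J₂) (h : i ≤ j), Function.Bijective ((M.restrict J₂).map h))

/-- The main walk: in the mixed position, the commuting square holds along a
left-up staircase in `J₁`, finding partners along the meet-staircase in `J₂`. -/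
lemma walk (hdisj : Disjoint J₁ J₂)
    (hconv₁ : PosetConvex J₁) (hconv₂ : PosetConvex J₂)
    (hconn₁ : ZigzagConnected J₁) (hconn₂ : ZigzagConnected J₂)
    (hle : ∀ x y : P, x ≤ y ↔ f x ≤ f y ∧ g x ≤ g y)
    (hfs : ∀ x y : P, f (x ⊔ y) = f x ⊔ f y) (hgs : ∀ x y : P, g (x ⊔ y) = g x ⊔ g y)
    (hfi : ∀ x y : P, f (x ⊓ y) = f x ⊓ f y) (hgi : ∀ x y : P, g (x ⊓ y) = g x ⊓ g y)
    (a : ↥J₁) (a' : ↥J₁) (b' : ↥J₂)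
    (hab' : (a' : P) ≤ ↑b')
    (hga : g ↑a ≤ g ↑b') (hga' : g ↑a' ≤ g ↑b') :
    ∀ {n : ↥J₁} (γ : Zigzag (↥J₁) n a'), Term γ → OrL f g γ →
      (∀ k ∈ γ.nodes, (k : P) ≤ ↑a ⊔ ↑a') →
    ∀ {m : ↥J₂} (R : Zigzag (↥J₂) m b'), TermD R → OrD f g R → (n : P) ≤ ↑m →
    GSQ M hiso₁ hiso₂ n m a' b'
  | _, .single _, _, _, _, m, R, hTm, hOrm, hnm =>
      GSQ_easy M hiso₁ hiso₂ hconv₁ hconv₂ f g hle hfs hgs hfi hgi (Or.inl hab')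
  | n, .consGe (b := v) h γ', hT, hOr, hbd, m, R, hTm, hOrm, hnm => by
      have hvm : (v : P) ≤ ↑m := le_trans (h : (v : P) ≤ ↑n) hnm
      have G1 : GSQ M hiso₁ hiso₂ n m v m :=
        GSQ_easy M hiso₁ hiso₂ hconv₁ hconv₂ f g hle hfs hgs hfi hgi (Or.inr hvm)
      have G2 : GSQ M hiso₁ hiso₂ v m a' b' :=
        walk hdisj hconv₁ hconv₂ hconn₁ hconn₂ hle hfs hgs hfi hgi a a' b' hab' hga hga'
          γ' (term_tail_Ge h γ' hT) (orl_tail_Ge h γ' hT hOr)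
          (fun k hk => hbd k (by simp only [Zigzag.nodes, List.mem_cons]; tauto))
          R hTm hOrm hvm
      exact GSQ_comp M hiso₁ hiso₂ hconn₁ hconn₂ hvm G1 G2
  | n, .consLe (b := c) h (.single _), hT, hOr, hbd, m, R, hTm, hOrm, hnm =>
      GSQ_easy M hiso₁ hiso₂ hconv₁ hconv₂ f g hle hfs hgs hfi hgi
        (Or.inl (le_trans (h : (n : P) ≤ ↑c) hab'))
  | n, .consLe (b := c) h (.consLe h₂ γ₂'), hT, _, _, m, R, _, _, _ => False.elim hT
  | n, .consLe (b := c) h (.consGe (b := v₂) h₂ γ₂'), hT, hOr, hbd, m, R, hTm, hOrm, hnm => by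
      obtain ⟨hnc, hv₂c, htight, hTtail⟩ := hT
      obtain ⟨hfv₂, hgv₂, hOrtail⟩ := hOr
      have hfc : f ↑c = f ↑n := by
        rw [htight, hfs]; exact sup_eq_left.mpr hfv₂.le
      have hcb : (c : P) ≤ ↑a ⊔ ↑a' := by
        apply hbd
        simp only [Zigzag.nodes, List.mem_cons]
        tauto
      have hgcb' : g ↑c ≤ g ↑b' := by
        have h1 : g ↑c ≤ g (↑a ⊔ ↑a' : P) := ((hle _ _).mp hcb).2
        rw [hgs] at h1
        exact h1.trans (sup_le hga hga')
      obtain ⟨m', R', hT', hOr', hUm'⟩ := step f g hdisj hconv₁ hconv₂ hle hfi hgi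
        R hTm hOrm n c (h : (n : P) ≤ ↑c) hfc hnm hgcb'
      have G1 : GSQ M hiso₁ hiso₂ n m c m' :=
        GSQ_easy M hiso₁ hiso₂ hconv₁ hconv₂ f g hle hfs hgs hfi hgi
          (Or.inl (le_trans (h : (n : P) ≤ ↑c) hUm'))
      have G2 : GSQ M hiso₁ hiso₂ c m' a' b' :=
        walk hdisj hconv₁ hconv₂ hconn₁ hconn₂ hle hfs hgs hfi hgi a a' b' hab' hga hga'
          (.consGe h₂ γ₂') hTtail hOrtail
          (fun k hk => hbd k (by simp only [Zigzag.nodes, List.mem_cons] at hk ⊢; tauto))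
          R' hT' hOr' hUm'
      exact GSQ_comp M hiso₁ hiso₂ hconn₁ hconn₂ hUm' G1 G2

/-- The mixed-position case of the main theorem. -/
lemma mixed (hdisj : Disjoint J₁ J₂)
    (hconv₁ : PosetConvex J₁) (hconv₂ : PosetConvex J₂)
    (hconn₁ : ZigzagConnected J₁) (hconn₂ : ZigzagConnected J₂)
    (hle : ∀ x y : P, x ≤ y ↔ f x ≤ f y ∧ g x ≤ g y)
    (hfs : ∀ x y : P, f (x ⊔ y) = f x ⊔ f y) (hgs : ∀ x y : P, g (x ⊔ y) = g x ⊔ g y)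
    (hfi : ∀ x y : P, f (x ⊓ y) = f x ⊓ f y) (hgi : ∀ x y : P, g (x ⊓ y) = g x ⊓ g y)
    {a a' : ↥J₁} {b b' : ↥J₂}
    (hab : (a : P) ≤ ↑b) (hab' : (a' : P) ≤ ↑b')
    (hfba : f ↑b' < f ↑a) (hgba : g ↑b < g ↑a') :
    GSQ M hiso₁ hiso₂ a b a' b' := by
  have hga'b' : g ↑a' ≤ g ↑b' := ((hle _ _).mp hab').2
  have hgaa' : g ↑a < g ↑a' := lt_of_le_of_lt ((hle _ _).mp hab).2 hgba
  have hgab' : g ↑a ≤ g ↑b' := hgaa'.le.trans hga'b'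
  have hfbb' : f ↑b' < f ↑b := lt_of_lt_of_le hfba ((hle _ _).mp hab).1
  obtain ⟨γ₀⟩ := hconn₁ a a'
  obtain ⟨γ, _, hT, hOr, hbd⟩ :=
    normU_or f g (chamberOf M J₁ hiso₁) hconv₁ hle hfs hgs γ₀ hgaa'
  obtain ⟨q₀⟩ := hconn₂ b b'
  obtain ⟨R, _, hTm, hOrm, _⟩ :=
    normD_or f g (chamberOf M J₂ hiso₂) hconv₂ hle hfi hgi q₀ hfbb'
  exact walk f g M hiso₁ hiso₂ hdisj hconv₁ hconv₂ hconn₁ hconn₂ hle hfs hgs hfi hgi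
    a a' b' hab' hgab' hga'b' γ hT hOr hbd R hTm hOrm hab

end WalkSec
end S6

namespace S6
section Assemble
variable {F : Type} [Field F]

lemma prod_pack_le : ∀ x y : ℝ × ℝ, x ≤ y ↔ x.1 ≤ y.1 ∧ x.2 ≤ y.2 :=
  fun _ _ => Prod.le_def

lemma prod_pack_le' : ∀ x y : ℝ × ℝ, x ≤ y ↔ x.2 ≤ y.2 ∧ x.1 ≤ y.1 :=
  fun x y => Prod.le_def.trans and_comm

lemma GSQ_main {J₁ J₂ : Set (ℝ × ℝ)} (hdisj : Disjoint J₁ J₂)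
    (hconv₁ : PosetConvex J₁) (hconn₁ : ZigzagConnected J₁)
    (hconv₂ : PosetConvex J₂) (hconn₂ : ZigzagConnected J₂)
    (M : PersistenceModule F (ℝ × ℝ))
    (hiso₁ : ∀ (i j : ↥J₁) (h : i ≤ j), Function.Bijective ((M.restrict J₁).map h))
    (hiso₂ : ∀ (i j : ↥J₂) (h : i ≤ j), Function.Bijective ((M.restrict J₂).map h))
    (a a' : ↥J₁) (b b' : ↥J₂) :
    GSQ M hiso₁ hiso₂ a b a' b' := by
  by_cases h1 : (a : ℝ × ℝ) ≤ ↑b'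
  · exact GSQ_easy M hiso₁ hiso₂ hconv₁ hconv₂ Prod.fst Prod.snd prod_pack_le
      (fun _ _ => rfl) (fun _ _ => rfl) (fun _ _ => rfl) (fun _ _ => rfl) (Or.inl h1)
  by_cases h2 : (a' : ℝ × ℝ) ≤ ↑b
  · exact GSQ_easy M hiso₁ hiso₂ hconv₁ hconv₂ Prod.fst Prod.snd prod_pack_le
      (fun _ _ => rfl) (fun _ _ => rfl) (fun _ _ => rfl) (fun _ _ => rfl) (Or.inr h2)
  intro hab hab' p q t
  rw [Prod.le_def, not_and_or] at h1 h2
  have hab1 := (Prod.le_def.mp hab).1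
  have hab2 := (Prod.le_def.mp hab).2
  have hab'1 := (Prod.le_def.mp hab').1
  have hab'2 := (Prod.le_def.mp hab').2
  rcases h1 with h1 | h1 <;> rcases h2 with h2 | h2
  · exact absurd ((hab'1.trans (not_le.mp h1).le).trans hab1) (not_le.mpr (not_le.mp h2))
  · exact mixed Prod.fst Prod.snd M hiso₁ hiso₂ hdisj hconv₁ hconv₂ hconn₁ hconn₂
      prod_pack_le (fun _ _ => rfl) (fun _ _ => rfl) (fun _ _ => rfl) (fun _ _ => rfl)
      hab hab' (not_le.mp h1) (not_le.mp h2) hab hab' p q t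
  · exact mixed Prod.snd Prod.fst M hiso₁ hiso₂ hdisj hconv₁ hconv₂ hconn₁ hconn₂
      prod_pack_le' (fun _ _ => rfl) (fun _ _ => rfl) (fun _ _ => rfl) (fun _ _ => rfl)
      hab hab' (not_le.mp h1) (not_le.mp h2) hab hab' p q t
  · exact absurd ((hab'2.trans (not_le.mp h1).le).trans hab2) (not_le.mpr (not_le.mp h2))

end Assemble
end S6


/-- Let `J₁, J₂` be disjoint connected convex subposets of `(ℝ,≤)²` and
`M` a persistence module whose structure maps inside each `Jₖ` are isomorphisms.
If `a, a' ∈ J₁`, `b, b' ∈ J₂`, `a ≤ b`, `a' ≤ b'`, then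
`M(b ⇝ b') ∘ M(a ≤ b) = M(a' ≤ b') ∘ M(a ⇝ a')`. -/
theorem statement6 (F : Type) [Field F] (J₁ J₂ : Set (ℝ × ℝ))
    (hdisj : Disjoint J₁ J₂)
    (hconv₁ : PosetConvex J₁) (hconn₁ : ZigzagConnected J₁)
    (hconv₂ : PosetConvex J₂) (hconn₂ : ZigzagConnected J₂)
    (M : PersistenceModule F (ℝ × ℝ))
    (hiso₁ : ∀ (i j : ↥J₁) (h : i ≤ j), Function.Bijective ((M.restrict J₁).map h))
    (hiso₂ : ∀ (i j : ↥J₂) (h : i ≤ j), Function.Bijective ((M.restrict J₂).map h))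
    (a a' : ↥J₁) (b b' : ↥J₂)
    (hab : (a : ℝ × ℝ) ≤ (b : ℝ × ℝ)) (hab' : (a' : ℝ × ℝ) ≤ (b' : ℝ × ℝ))
    (p : Zigzag (↥J₁) a a') (q : Zigzag (↥J₂) b b') :
    (zigzagMap (M.restrict J₂) hiso₂ q).comp (M.map hab)
      = (M.map hab').comp (zigzagMap (M.restrict J₁) hiso₁ p) := by
  ext t
  show zigzagMap (M.restrict J₂) hiso₂ q (M.map hab t) = M.map hab' (zigzagMap (M.restrict J₁) hiso₁ p t)
  rw [S6.zigzagMap_eq_czig p, S6.zigzagMap_eq_czig q]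
  exact S6.GSQ_main hdisj hconv₁ hconn₁ hconv₂ hconn₂ M hiso₁ hiso₂ a a' b b'
    hab hab' p q t
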